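/- arXiv:1801.06758 — 3 statements merged into one kernel-verified Lean document; each statement's English description precedes it below -/
import Mathlib

section
/- Let T be a finite index set and, for each t ∈ T, let A_t be a finite set of colors. For S ⊆ T define the discrepancy disc(S) = |S| − |⋃_{t∈S} A_t|. Suppose S ⊆ T attains the maximum of disc over all subsets of T. Then for every function f defined on S with f(t) ∈ A_t for all t ∈ S, there exists an injective function g on T∖S such that g(t) ∈ A_t ∖ f(S) for all t ∈ T∖S (where f(S) denotes the set of values of f). -/
/-- The discrepancy lemma (abstract set-system form): if `S ⊆ T` maximizes the
discrepancy `|S| - |⋃_{t ∈ S} A t|` among subsets of `T`, then any choice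
`f` of colors for `S` from the lists can be completed by injectively assigning
to each `t ∈ T \ S` a color of `A t` not used by `f` on `S`. -/
theorem discrepancy_extension
    {ι α : Type*} [DecidableEq ι] [DecidableEq α]
    (T : Finset ι) (A : ι → Finset α)
    (S : Finset ι) (hST : S ⊆ T)
    (hmax : ∀ S' ⊆ T,
      (S'.card : ℤ) - ((S'.biUnion A).card : ℤ) ≤
        (S.card : ℤ) - ((S.biUnion A).card : ℤ))
    (f : ι → α) (hf : ∀ t ∈ S, f t ∈ A t) :
    ∃ g : ι → α, Set.InjOn g ↑(T \ S) ∧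
      ∀ t ∈ T \ S, g t ∈ A t \ S.image f := by
  classical
  set B : ι → Finset α := fun t => A t \ S.image f with hB
  have hall : ∀ s : Finset (↥(T \ S : Finset ι)),
      s.card ≤ (s.biUnion (fun x => B x.1)).card := by
    intro s
    set W : Finset ι := s.image Subtype.val with hW
    have hWcard : W.card = s.card :=
      Finset.card_image_of_injective s Subtype.val_injective
    have hWsub : W ⊆ T \ S := by
      intro t ht
      rcases Finset.mem_image.mp ht with ⟨x, _, rfl⟩
      exact x.2
    have hWS : Disjoint S W := by
      refine Finset.disjoint_left.mpr fun t htS htW => ?_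
      exact (Finset.mem_sdiff.mp (hWsub htW)).2 htS
    have hUnion : (S ∪ W).biUnion A ⊆ S.biUnion A ∪ W.biUnion B := by
      intro x hx
      rcases Finset.mem_biUnion.mp hx with ⟨t, ht, hxA⟩
      rcases Finset.mem_union.mp ht with htS | htW
      · exact Finset.mem_union_left _ (Finset.mem_biUnion.mpr ⟨t, htS, hxA⟩)
      · by_cases hxf : x ∈ S.image f
        · rcases Finset.mem_image.mp hxf with ⟨u, hu, rfl⟩
          exact Finset.mem_union_left _ (Finset.mem_biUnion.mpr ⟨u, hu, hf u hu⟩)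
        · exact Finset.mem_union_right _
            (Finset.mem_biUnion.mpr ⟨t, htW, Finset.mem_sdiff.mpr ⟨hxA, hxf⟩⟩)
    have hcardU : ((S ∪ W).biUnion A).card ≤ (S.biUnion A).card + (W.biUnion B).card :=
      le_trans (Finset.card_le_card hUnion) (Finset.card_union_le _ _)
    have hcardSW : (S ∪ W).card = S.card + W.card := Finset.card_union_of_disjoint hWS
    have hsub : S ∪ W ⊆ T := Finset.union_subset hST (hWsub.trans Finset.sdiff_subset)
    have hmx := hmax (S ∪ W) hsub
    have hbi : s.biUnion (fun x => B x.1) = W.biUnion B := by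
      ext x
      simp only [Finset.mem_biUnion, hW, Finset.mem_image]
      constructor
      · rintro ⟨a, ha, hx⟩; exact ⟨a.1, ⟨a, ha, rfl⟩, hx⟩
      · rintro ⟨t, ⟨a, ha, rfl⟩, hx⟩; exact ⟨a, ha, hx⟩
    rw [hbi, ← hWcard]
    omega
  obtain ⟨f', hf'inj, hf'mem⟩ :=
    (Finset.all_card_le_biUnion_card_iff_exists_injective (fun x : ↥(T \ S : Finset ι) => B x.1)).mp hall
  refine ⟨fun t => if h : t ∈ T \ S then f' ⟨t, h⟩ else f t, ?_, ?_⟩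
  · intro a ha b hb hab
    rw [Finset.mem_coe] at ha hb
    simp only [dif_pos ha, dif_pos hb] at hab
    exact congrArg Subtype.val (hf'inj hab)
  · intro t ht
    simp only [dif_pos ht]
    exact hf'mem ⟨t, ht⟩
end

section
/- Every connected simple graph with maximum degree at most 4 that contains a vertex of degree at most 3 is strongly 22-edge-choosable. -/
/-- Two edges are "close" (distance at most 1): some endpoint of one equals,
or is adjacent to, some endpoint of the other. In a strong edge-coloring,
distinct close edges must get distinct colors. -/
def EdgeClose {V : Type*} (G : SimpleGraph V) (e₁ e₂ : Sym2 V) : Prop :=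
  ∃ u w, u ∈ e₁ ∧ w ∈ e₂ ∧ (u = w ∨ G.Adj u w)

/-- `c` is a strong edge-coloring of `G` (viewed as a function on all of `Sym2 V`,
only its values on edges of `G` matter). -/
def IsStrongEdgeColoringOn {V : Type*} (G : SimpleGraph V) (c : Sym2 V → ℕ) : Prop :=
  ∀ e₁ ∈ G.edgeSet, ∀ e₂ ∈ G.edgeSet, e₁ ≠ e₂ → EdgeClose G e₁ e₂ → c e₁ ≠ c e₂

/-- `G` is strongly `L`-edge-colorable. -/
def StronglyLColorable {V : Type*} (G : SimpleGraph V) (L : Sym2 V → Finset ℕ) : Prop :=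
  ∃ c : Sym2 V → ℕ, IsStrongEdgeColoringOn G c ∧ ∀ e ∈ G.edgeSet, c e ∈ L e

/-- `G` is strongly `k`-edge-choosable. -/
def StronglyEdgeChoosable {V : Type*} (G : SimpleGraph V) (k : ℕ) : Prop :=
  ∀ L : Sym2 V → Finset ℕ, (∀ e ∈ G.edgeSet, k ≤ (L e).card) → StronglyLColorable G L

/-! ### Auxiliary machinery -/

namespace StrongAux

variable {V : Type*}

lemma edgeClose_symm {G : SimpleGraph V} {e f : Sym2 V} (h : EdgeClose G e f) :
    EdgeClose G f e := by
  obtain ⟨u, w, hu, hw, huw⟩ := h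
  exact ⟨w, u, hw, hu, huw.imp Eq.symm SimpleGraph.Adj.symm⟩

/-- The rank of an edge: the minimum distance from `v` to an endpoint. -/
noncomputable def erank (G : SimpleGraph V) (v : V) : Sym2 V → ℕ :=
  Sym2.lift ⟨fun a b => min (G.dist v a) (G.dist v b), fun a b => min_comm _ _⟩

lemma erank_mk (G : SimpleGraph V) (v a b : V) :
    erank G v s(a, b) = min (G.dist v a) (G.dist v b) := rfl

lemma erank_le_of_mem (G : SimpleGraph V) (v : V) {a : V} {e : Sym2 V} (h : a ∈ e) :
    erank G v e ≤ G.dist v a := by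
  induction e with
  | _ x y =>
    rcases Sym2.mem_iff.mp h with rfl | rfl
    · exact min_le_left _ _
    · exact min_le_right _ _

/-- Pick an element of a finset of naturals (junk value `0` if empty). -/
noncomputable def pick (s : Finset ℕ) : ℕ :=
  if h : s.Nonempty then h.choose else 0

lemma pick_mem {s : Finset ℕ} (h : s.Nonempty) : pick s ∈ s := by
  rw [pick, dif_pos h]; exact h.choose_spec

section Greedy

variable [DecidableEq V] (G : SimpleGraph V) (L : Sym2 V → Finset ℕ)

/-- Boolean closeness (classical). -/
noncomputable def closeB (e f : Sym2 V) : Bool :=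
  @decide (EdgeClose G e f) (Classical.propDecidable _)

lemma closeB_iff {e f : Sym2 V} : closeB G e f = true ↔ EdgeClose G e f := by
  simp [closeB]

/-- Colors forbidden for `e` by an already-colored list. -/
noncomputable def forb (prev : List (Sym2 V × ℕ)) (e : Sym2 V) : Finset ℕ :=
  ((prev.filter (fun p => closeB G e p.1)).map Prod.snd).toFinset

/-- Greedy coloring: the head of the list is colored last. -/
noncomputable def greedy : List (Sym2 V) → List (Sym2 V × ℕ)
  | [] => []
  | e :: rest =>
    let prev := greedy rest
    (e, pick (L e \ forb G prev e)) :: prev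

/-- Extract the color of an edge from the association list. -/
noncomputable def assign (lst : List (Sym2 V × ℕ)) (e : Sym2 V) : ℕ :=
  ((lst.find? (fun p => decide (p.1 = e))).map Prod.snd).getD 0

lemma assign_cons (f : Sym2 V) (c : ℕ) (lst : List (Sym2 V × ℕ)) (e : Sym2 V) :
    assign ((f, c) :: lst) e = if f = e then c else assign lst e := by
  by_cases h : f = e <;> simp [assign, List.find?_cons, h]

lemma greedy_map_fst (l : List (Sym2 V)) : (greedy G L l).map Prod.fst = l := by
  induction l with
  | nil => rfl
  | cons e rest ih => simpa [greedy] using ih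

lemma assign_eq_of_mem {lst : List (Sym2 V × ℕ)} (hn : (lst.map Prod.fst).Nodup)
    {e : Sym2 V} {c : ℕ} (h : (e, c) ∈ lst) : assign lst e = c := by
  induction lst with
  | nil => simp at h
  | cons p tl ih =>
    rcases List.mem_cons.mp h with rfl | h'
    · simp [assign, List.find?_cons]
    · have hne : p.1 ≠ e := by
        intro he
        have hm : e ∈ tl.map Prod.fst := List.mem_map.mpr ⟨(e, c), h', rfl⟩
        exact (List.nodup_cons.mp hn).1 (by rw [he]; exact hm)
      obtain ⟨p1, p2⟩ := p
      rw [assign_cons, if_neg hne]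
      exact ih (List.nodup_cons.mp hn).2 h'

lemma greedy_good (v : V)
    (hS : ∀ e ∈ G.edgeSet, ∃ s : Finset (Sym2 V), s.card ≤ 21 ∧
      ∀ f ∈ G.edgeSet, f ≠ e → EdgeClose G e f → erank G v e ≤ erank G v f → f ∈ s)
    (hL : ∀ e ∈ G.edgeSet, 22 ≤ (L e).card) :
    ∀ l : List (Sym2 V), l.Nodup → (∀ e ∈ l, e ∈ G.edgeSet) →
      l.Pairwise (fun a b => erank G v a ≤ erank G v b) →
      (∀ e ∈ l, assign (greedy G L l) e ∈ L e) ∧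
      (∀ e ∈ l, ∀ f ∈ l, e ≠ f → EdgeClose G e f →
        assign (greedy G L l) e ≠ assign (greedy G L l) f) := by
  intro l
  induction l with
  | nil => exact fun _ _ _ => ⟨fun e he => absurd he List.not_mem_nil, fun e he => absurd he List.not_mem_nil⟩
  | cons e rest ih =>
    intro hnodup hmem hpair
    have hnd := List.nodup_cons.mp hnodup
    have hpr := List.pairwise_cons.mp hpair
    obtain ⟨ihA, ihB⟩ := ih hnd.2 (fun f hf => hmem f (List.mem_cons_of_mem e hf)) hpr.2
    have he : e ∈ G.edgeSet := hmem e List.mem_cons_self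
    set prev := greedy G L rest with hprev
    -- the forbidden set is small
    have hforb : (forb G prev e).card ≤ 21 := by
      obtain ⟨s, hs21, hsmem⟩ := hS e he
      have h1 : (forb G prev e).card ≤ (prev.filter (fun p => closeB G e p.1)).length := by
        refine le_trans (List.toFinset_card_le _) ?_
        simp
      have h2 : ((prev.filter (fun p => closeB G e p.1)).map Prod.fst)
          = rest.filter (fun f => closeB G e f) := by
        conv_rhs => rw [← greedy_map_fst G L rest, List.filter_map]
        rfl
      have h3 : (prev.filter (fun p => closeB G e p.1)).length
          = (rest.filter (fun f => closeB G e f)).length := by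
        rw [← List.length_map Prod.fst, h2]
      have h4 : (rest.filter (fun f => closeB G e f)).toFinset ⊆ s := by
        intro f hf
        rw [List.mem_toFinset, List.mem_filter] at hf
        have hfr : f ∈ rest := hf.1
        have hcl : EdgeClose G e f := (closeB_iff G).mp hf.2
        have hfe : f ≠ e := fun h => hnd.1 (h ▸ hfr)
        exact hsmem f (hmem f (List.mem_cons_of_mem e hfr)) hfe hcl (hpr.1 f hfr)
      have h5 : (rest.filter (fun f => closeB G e f)).length
          = (rest.filter (fun f => closeB G e f)).toFinset.card := by
        rw [List.toFinset_card_of_nodup (hnd.2.filter _)]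
      calc (forb G prev e).card ≤ _ := h1
        _ = _ := h3
        _ = _ := h5
        _ ≤ s.card := Finset.card_le_card h4
        _ ≤ 21 := hs21
    have hne : (L e \ forb G prev e).Nonempty := by
      rw [← Finset.card_pos]
      have := Finset.le_card_sdiff (forb G prev e) (L e)
      have := hL e he
      omega
    have hpick := pick_mem hne
    have hgr : greedy G L (e :: rest) = (e, pick (L e \ forb G prev e)) :: prev := rfl
    have hassign_e : assign (greedy G L (e :: rest)) e = pick (L e \ forb G prev e) := by
      rw [hgr, assign_cons, if_pos rfl]
    have hassign_rest : ∀ f ∈ rest, assign (greedy G L (e :: rest)) f = assign prev f := by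
      intro f hf
      rw [hgr, assign_cons, if_neg (fun h => hnd.1 (by rw [h]; exact hf))]
    -- color of an edge close to e in rest is forbidden
    have hforbidden : ∀ f ∈ rest, EdgeClose G e f → assign prev f ∈ forb G prev e := by
      intro f hf hcl
      have : f ∈ prev.map Prod.fst := by rw [greedy_map_fst]; exact hf
      obtain ⟨⟨p1, p2⟩, hp, hp1⟩ := List.mem_map.mp this
      have hd1 : p1 = f := hp1
      subst hd1
      have hnpf : (prev.map Prod.fst).Nodup := by rw [greedy_map_fst]; exact hnd.2
      have : assign prev p1 = p2 := assign_eq_of_mem hnpf hp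
      rw [this, forb]
      rw [List.mem_toFinset]
      refine List.mem_map.mpr ⟨(p1, p2), ?_, rfl⟩
      exact List.mem_filter.mpr ⟨hp, (closeB_iff G).mpr hcl⟩
    constructor
    · intro f hf
      rcases List.mem_cons.mp hf with rfl | hf'
      · rw [hassign_e]; exact (Finset.mem_sdiff.mp hpick).1
      · rw [hassign_rest f hf']; exact ihA f hf'
    · intro a ha b hb hab hcl
      rcases List.mem_cons.mp ha with rfl | ha' <;> rcases List.mem_cons.mp hb with h | hb'
      · exact absurd h.symm hab
      · rw [hassign_e, hassign_rest b hb']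
        intro hq
        exact (Finset.mem_sdiff.mp hpick).2 (hq ▸ hforbidden b hb' hcl)
      · subst h
        rw [hassign_e, hassign_rest a ha']
        intro hq
        exact (Finset.mem_sdiff.mp hpick).2 (hq ▸ hforbidden a ha' (edgeClose_symm hcl))
      · rw [hassign_rest a ha', hassign_rest b hb']
        exact ihB a ha' b hb' hab hcl

end Greedy

section Count

variable [Fintype V] [DecidableEq V] (G : SimpleGraph V) [DecidableRel G.Adj]

lemma exists_parent (hconn : G.Connected) {v x : V} (hd : G.dist v x ≠ 0) :
    ∃ p, G.Adj x p ∧ G.dist v p + 1 = G.dist v x := by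
  obtain ⟨w, hw⟩ := (hconn v x).exists_walk_length_eq_dist
  cases hr : w.reverse with
  | nil =>
    exfalso
    have h0 : w.reverse.length = 0 := by rw [hr]; rfl
    rw [SimpleGraph.Walk.length_reverse, hw] at h0
    exact hd h0
  | cons h q =>
    rename_i p
    have hlen : q.length + 1 = G.dist v x := by
      have h0 := congrArg SimpleGraph.Walk.length hr
      rw [SimpleGraph.Walk.length_reverse, hw] at h0
      simpa using h0.symm
    refine ⟨p, h, ?_⟩
    have h1 : G.dist v p ≤ q.length := by
      rw [SimpleGraph.dist_comm]
      exact SimpleGraph.dist_le q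
    have h2 : G.dist v x ≤ G.dist v p + 1 := by
      obtain ⟨w2, hw2⟩ := (hconn v p).exists_walk_length_eq_dist
      have := SimpleGraph.dist_le (w2.concat h.symm)
      rwa [SimpleGraph.Walk.length_concat, hw2] at this
    omega


lemma count_aux (hconn : G.Connected) (hΔ : ∀ u, G.degree u ≤ 4) {v x y : V}
    (hvdeg : G.degree v ≤ 3) (hxy : G.Adj x y) (hd : G.dist v x ≤ G.dist v y) :
    ∃ s : Finset (Sym2 V), s.card ≤ 21 ∧
      ∀ f ∈ G.edgeSet, f ≠ s(x, y) → EdgeClose G s(x, y) f →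
        G.dist v x ≤ erank G v f → f ∈ s := by
  set d := G.dist v x with hdd
  have hexy : s(x, y) ∈ G.edgeSet := hxy
  have hIx : s(x, y) ∈ G.incidenceFinset x := by
    rw [SimpleGraph.mem_incidenceFinset]; exact ⟨hxy, Sym2.mem_mk_left x y⟩
  have hIy : s(x, y) ∈ G.incidenceFinset y := by
    rw [SimpleGraph.mem_incidenceFinset]; exact ⟨hxy, Sym2.mem_mk_right x y⟩
  obtain ⟨A, X, hAsub, hXsub, hAcard, hXcard, hAmem, hXmem⟩ :
      ∃ (A : Finset (Sym2 V)) (X : Finset V),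
        A ⊆ G.incidenceFinset x ∧ X ⊆ G.neighborFinset x ∧
        G.degree x ≤ A.card + 2 ∧ G.degree x ≤ X.card + 2 ∧
        (∀ f ∈ A, f = s(x, y) ∨ erank G v f < d) ∧
        (∀ z ∈ X, z = y ∨ G.dist v z < d) := by
    by_cases hd0 : d = 0
    · have hxv : v = x := hconn.dist_eq_zero_iff.mp hd0
      have hdx : G.degree x ≤ 3 := by rw [← hxv]; exact hvdeg
      refine ⟨{s(x, y)}, {y}, by simpa using hIx, ?_, ?_, ?_, ?_, ?_⟩
      · simp [SimpleGraph.mem_neighborFinset, hxy]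
      · simpa using hdx
      · simpa using hdx
      · intro f hf; exact Or.inl (by simpa using hf)
      · intro z hz; exact Or.inl (by simpa using hz)
    · obtain ⟨p, hp, hpd⟩ := exists_parent G hconn hd0
      have hpy : p ≠ y := by
        intro h; rw [h] at hpd; omega
      have hpx : p ≠ x := by
        intro h; rw [h] at hpd; omega
      have hIxp : s(x, p) ∈ G.incidenceFinset x := by
        rw [SimpleGraph.mem_incidenceFinset]; exact ⟨hp, Sym2.mem_mk_left x p⟩
      have hpairne : s(x, y) ≠ s(x, p) := by
        intro h
        rcases Sym2.eq_iff.mp h with ⟨-, h2⟩ | ⟨h1, -⟩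
        · exact hpy h2.symm
        · exact hpx h1.symm
      refine ⟨{s(x, y), s(x, p)}, {y, p}, ?_, ?_, ?_, ?_, ?_, ?_⟩
      · intro f hf
        rcases Finset.mem_insert.mp hf with rfl | hf
        · exact hIx
        · rw [Finset.mem_singleton] at hf; exact hf ▸ hIxp
      · intro z hz
        rcases Finset.mem_insert.mp hz with rfl | hz
        · exact (SimpleGraph.mem_neighborFinset _ _ _).mpr hxy
        · rw [Finset.mem_singleton] at hz
          exact hz ▸ (SimpleGraph.mem_neighborFinset _ _ _).mpr hp
      · rw [Finset.card_insert_of_notMem (by simpa using hpairne), Finset.card_singleton]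
        exact hΔ x
      · rw [Finset.card_insert_of_notMem (by simpa using Ne.symm hpy), Finset.card_singleton]
        exact hΔ x
      · intro f hf
        rcases Finset.mem_insert.mp hf with rfl | hf
        · exact Or.inl rfl
        · rw [Finset.mem_singleton] at hf
          refine Or.inr ?_
          subst hf
          have h1 : erank G v s(x, p) ≤ G.dist v p := erank_le_of_mem G v (Sym2.mem_mk_right x p)
          omega
      · intro z hz
        rcases Finset.mem_insert.mp hz with rfl | hz
        · exact Or.inl rfl
        · rw [Finset.mem_singleton] at hz; subst hz; exact Or.inr (by omega)
  set Ix := G.incidenceFinset x with hIxdef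
  set Iy := G.incidenceFinset y with hIydef
  set Z : Finset V := (G.neighborFinset x \ X) ∪ (G.neighborFinset y \ {x}) with hZdef
  have hxNy : x ∈ G.neighborFinset y := (SimpleGraph.mem_neighborFinset _ _ _).mpr hxy.symm
  refine ⟨(Ix \ A) ∪ ((Iy \ {s(x, y)}) ∪
      Z.biUnion (fun z => G.incidenceFinset z \ (Ix ∪ Iy))), ?_, ?_⟩
  · -- cardinality bound
    have hcIx : Ix.card = G.degree x := G.card_incidenceFinset_eq_degree x
    have hcIy : Iy.card = G.degree y := G.card_incidenceFinset_eq_degree y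
    have c1 : (Ix \ A).card ≤ 2 := by
      rw [Finset.card_sdiff_of_subset hAsub, hcIx]
      omega
    have c2 : (Iy \ {s(x, y)}).card ≤ 3 := by
      rw [Finset.card_sdiff_of_subset (Finset.singleton_subset_iff.mpr hIy), hcIy, Finset.card_singleton]
      have := hΔ y
      omega
    have c3 : Z.card ≤ 5 := by
      have e1 : (G.neighborFinset x \ X).card ≤ 2 := by
        rw [Finset.card_sdiff_of_subset hXsub, SimpleGraph.card_neighborFinset_eq_degree]
        omega
      have e2 : (G.neighborFinset y \ {x}).card ≤ 3 := by
        rw [Finset.card_sdiff_of_subset (Finset.singleton_subset_iff.mpr hxNy),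
          SimpleGraph.card_neighborFinset_eq_degree, Finset.card_singleton]
        have := hΔ y
        omega
      calc Z.card ≤ (G.neighborFinset x \ X).card + (G.neighborFinset y \ {x}).card :=
            Finset.card_union_le _ _
        _ ≤ 5 := by omega
    have c4 : ∀ z ∈ Z, (G.incidenceFinset z \ (Ix ∪ Iy)).card ≤ 3 := by
      intro z hz
      have hg : ∃ g, g ∈ G.incidenceFinset z ∧ g ∈ Ix ∪ Iy := by
        rcases Finset.mem_union.mp hz with hz' | hz'
        · have hzx : G.Adj x z := (SimpleGraph.mem_neighborFinset _ _ _).mp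
            (Finset.mem_sdiff.mp hz').1
          refine ⟨s(z, x), ?_, Finset.mem_union_left _ ?_⟩
          · rw [SimpleGraph.mem_incidenceFinset]
            exact ⟨hzx.symm, Sym2.mem_mk_left z x⟩
          · rw [hIxdef, SimpleGraph.mem_incidenceFinset]
            exact ⟨hzx.symm, Sym2.mem_mk_right z x⟩
        · have hzy : G.Adj y z := (SimpleGraph.mem_neighborFinset _ _ _).mp
            (Finset.mem_sdiff.mp hz').1
          refine ⟨s(z, y), ?_, Finset.mem_union_right _ ?_⟩
          · rw [SimpleGraph.mem_incidenceFinset]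
            exact ⟨hzy.symm, Sym2.mem_mk_left z y⟩
          · rw [hIydef, SimpleGraph.mem_incidenceFinset]
            exact ⟨hzy.symm, Sym2.mem_mk_right z y⟩
      obtain ⟨g, hg1, hg2⟩ := hg
      have hsub : G.incidenceFinset z \ (Ix ∪ Iy) ⊆ G.incidenceFinset z \ {g} :=
        Finset.sdiff_subset_sdiff (subset_refl _) (Finset.singleton_subset_iff.mpr hg2)
      have := Finset.card_le_card hsub
      rw [Finset.card_sdiff_of_subset (Finset.singleton_subset_iff.mpr hg1),
        G.card_incidenceFinset_eq_degree, Finset.card_singleton] at this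
      have := hΔ z
      omega
    have c5 : (Z.biUnion (fun z => G.incidenceFinset z \ (Ix ∪ Iy))).card ≤ 15 := by
      have := Finset.card_biUnion_le_card_mul Z (fun z => G.incidenceFinset z \ (Ix ∪ Iy)) 3 c4
      omega
    calc ((Ix \ A) ∪ ((Iy \ {s(x, y)}) ∪
          Z.biUnion (fun z => G.incidenceFinset z \ (Ix ∪ Iy)))).card
        ≤ (Ix \ A).card + ((Iy \ {s(x, y)}) ∪
          Z.biUnion (fun z => G.incidenceFinset z \ (Ix ∪ Iy))).card := Finset.card_union_le _ _
      _ ≤ (Ix \ A).card + ((Iy \ {s(x, y)}).card +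
          (Z.biUnion (fun z => G.incidenceFinset z \ (Ix ∪ Iy))).card) := by
            have := Finset.card_union_le (Iy \ {s(x, y)})
              (Z.biUnion (fun z => G.incidenceFinset z \ (Ix ∪ Iy)))
            omega
      _ ≤ 21 := by omega
  · -- covering
    intro f hf hne hclose hrank
    by_cases hx : x ∈ f
    · refine Finset.mem_union_left _ (Finset.mem_sdiff.mpr ⟨?_, ?_⟩)
      · rw [hIxdef, SimpleGraph.mem_incidenceFinset]; exact ⟨hf, hx⟩
      · intro hfA
        rcases hAmem f hfA with h | h
        · exact hne h
        · omega
    by_cases hy : y ∈ f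
    · refine Finset.mem_union_right _ (Finset.mem_union_left _ (Finset.mem_sdiff.mpr ⟨?_, ?_⟩))
      · rw [hIydef, SimpleGraph.mem_incidenceFinset]; exact ⟨hf, hy⟩
      · simpa using hne
    obtain ⟨u, w, hu, hw, huw⟩ := hclose
    have hu' : u = x ∨ u = y := Sym2.mem_iff.mp hu
    have hwx : w ≠ x := fun h => hx (h ▸ hw)
    have hwy : w ≠ y := fun h => hy (h ▸ hw)
    have hadj : G.Adj u w := by
      rcases huw with h | h
      · exfalso
        rcases hu' with rfl | rfl
        · exact hwx h.symm
        · exact hwy h.symm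
      · exact h
    have hdistw : d ≤ G.dist v w := le_trans hrank (erank_le_of_mem G v hw)
    have hzZ : w ∈ Z := by
      rcases hu' with rfl | rfl
      · refine Finset.mem_union_left _ (Finset.mem_sdiff.mpr
          ⟨(SimpleGraph.mem_neighborFinset _ _ _).mpr hadj, ?_⟩)
        intro hwX
        rcases hXmem w hwX with h | h
        · exact hwy h
        · omega
      · exact Finset.mem_union_right _ (Finset.mem_sdiff.mpr
          ⟨(SimpleGraph.mem_neighborFinset _ _ _).mpr hadj, by simpa using hwx⟩)
    refine Finset.mem_union_right _ (Finset.mem_union_right _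
      (Finset.mem_biUnion.mpr ⟨w, hzZ, Finset.mem_sdiff.mpr ⟨?_, ?_⟩⟩))
    · rw [SimpleGraph.mem_incidenceFinset]; exact ⟨hf, hw⟩
    · rw [Finset.mem_union]
      rintro (h | h)
      · rw [hIxdef, SimpleGraph.mem_incidenceFinset] at h
        exact hx h.2
      · rw [hIydef, SimpleGraph.mem_incidenceFinset] at h
        exact hy h.2

lemma count_main (hconn : G.Connected) (hΔ : ∀ u, G.degree u ≤ 4) {v : V}
    (hvdeg : G.degree v ≤ 3) (e : Sym2 V) (he : e ∈ G.edgeSet) :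
    ∃ s : Finset (Sym2 V), s.card ≤ 21 ∧
      ∀ f ∈ G.edgeSet, f ≠ e → EdgeClose G e f → erank G v e ≤ erank G v f → f ∈ s := by
  induction e with
  | _ x y =>
    have hadj : G.Adj x y := he
    have hswap : s(x, y) = s(y, x) := Sym2.eq_swap
    rcases le_total (G.dist v x) (G.dist v y) with h | h
    · obtain ⟨s, h1, h2⟩ := count_aux G hconn hΔ hvdeg hadj h
      refine ⟨s, h1, fun f hf hne hcl hr => h2 f hf hne hcl ?_⟩
      rwa [erank_mk, min_eq_left h] at hr
    · obtain ⟨s, h1, h2⟩ := count_aux G hconn hΔ hvdeg hadj.symm h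
      refine ⟨s, h1, fun f hf hne hcl hr => h2 f hf ?_ ?_ ?_⟩
      · rw [← hswap]; exact hne
      · rw [← hswap]; exact hcl
      · rwa [erank_mk, min_eq_right h] at hr

end Count
end StrongAux

/-- Every connected simple graph with maximum degree at most 4 containing a
vertex of degree at most 3 is strongly 22-edge-choosable. -/
theorem strongly_22_edge_choosable_of_exists_degree_le_three
    {V : Type*} [Fintype V] (G : SimpleGraph V) [DecidableRel G.Adj]
    (hconn : G.Connected) (hΔ : ∀ u, G.degree u ≤ 4)
    (hv : ∃ v, G.degree v ≤ 3) :
    StronglyEdgeChoosable G 22 := by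
  classical
  intro L hL
  obtain ⟨v, hvdeg⟩ := hv
  set lle : Sym2 V → Sym2 V → Bool :=
    fun a b => decide (StrongAux.erank G v a ≤ StrongAux.erank G v b) with hlle
  set l := G.edgeFinset.toList.mergeSort lle with hl
  have hperm : l.Perm G.edgeFinset.toList := List.mergeSort_perm _ _
  have hnodup : l.Nodup := hperm.nodup_iff.mpr (Finset.nodup_toList _)
  have hmem : ∀ e, e ∈ G.edgeSet ↔ e ∈ l := by
    intro e
    rw [hperm.mem_iff, Finset.mem_toList, SimpleGraph.mem_edgeFinset]
  have hsorted : l.Pairwise (fun a b => StrongAux.erank G v a ≤ StrongAux.erank G v b) := by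
    have h := List.pairwise_mergeSort (le := lle)
      (fun a b c hab hbc => by
        simp only [hlle, decide_eq_true_eq] at hab hbc ⊢
        exact le_trans hab hbc)
      (fun a b => by
        rcases Nat.le_total (StrongAux.erank G v a) (StrongAux.erank G v b) with h | h <;>
          simp [hlle, h])
      G.edgeFinset.toList
    rw [← hl] at h
    exact h.imp (fun hab => by simpa [hlle] using hab)
  have hS : ∀ e ∈ G.edgeSet, ∃ s : Finset (Sym2 V), s.card ≤ 21 ∧
      ∀ f ∈ G.edgeSet, f ≠ e → EdgeClose G e f →
        StrongAux.erank G v e ≤ StrongAux.erank G v f → f ∈ s :=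
    fun e he => StrongAux.count_main G hconn hΔ hvdeg e he
  obtain ⟨hA, hB⟩ := StrongAux.greedy_good G L v hS hL l hnodup
    (fun e he' => (hmem e).mpr he') hsorted
  exact ⟨StrongAux.assign (StrongAux.greedy G L l),
    fun e₁ h1 e₂ h2 hne hcl => hB e₁ ((hmem e₁).mp h1) e₂ ((hmem e₂).mp h2) hne hcl,
    fun e he => hA e ((hmem e).mp he)⟩
end

section
/- Let G be a connected simple graph with maximum degree at most 4 and suppose there is a list assignment L with |L(e)| ≥ 22 for every edge e such that G is not strongly L-edge-colorable but every proper subgraph of G is strongly L-edge-colorable (restricting L to its edges). Then G is 4-regular. -/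
lemma edgeClose_symm {V : Type*} (G : SimpleGraph V) {e f : Sym2 V}
    (h : EdgeClose G e f) : EdgeClose G f e := by
  obtain ⟨u, w, hu, hw, hor⟩ := h
  exact ⟨w, u, hw, hu, hor.imp Eq.symm (fun h => h.symm)⟩

/-- Counting lemma: if `v` has degree at most 3, `x` is a neighbour of `v`, and all
degrees are at most 4, then any collection of edges that are distinct from
`s(v,x)` and close to it has at most 20 members. -/
lemma close_count {V : Type*} [Fintype V] [DecidableEq V] (G : SimpleGraph V)
    [DecidableRel G.Adj]
    (hΔ : ∀ u, G.degree u ≤ 4) {v x : V} (hvx : G.Adj v x) (hdv : G.degree v ≤ 3)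
    (A : Finset (Sym2 V))
    (hA : ∀ f ∈ A, f ∈ G.edgeSet ∧ f ≠ s(v, x) ∧ EdgeClose G s(v, x) f) :
    A.card ≤ 20 := by
  classical
  set e : Sym2 V := s(v, x) with he
  have hinc : ∀ {f : Sym2 V} {w : V}, f ∈ G.edgeSet → w ∈ f → f ∈ G.incidenceFinset w := by
    intro f w h1 h2
    rw [SimpleGraph.mem_incidenceFinset]
    exact ⟨h1, h2⟩
  set T : Finset (Sym2 V) :=
    G.incidenceFinset v ∪ (G.incidenceFinset x \ {e}) ∪
      ((G.neighborFinset v).erase x).biUnion (fun w => G.incidenceFinset w \ {s(v, w)}) ∪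
      ((G.neighborFinset x).erase v).biUnion (fun w => G.incidenceFinset w \ {s(x, w)})
    with hT
  have heT : e ∈ T := by
    have : e ∈ G.incidenceFinset v := hinc (G.mem_edgeSet.mpr hvx) (Sym2.mem_mk_left v x)
    simp only [hT, Finset.mem_union]
    exact Or.inl (Or.inl (Or.inl this))
  have hsub : A ⊆ T.erase e := by
    intro f hf
    obtain ⟨hfE, hfe, u, w, hu, hw, hor⟩ := hA f hf
    rw [Finset.mem_erase]
    refine ⟨hfe, ?_⟩
    simp only [hT, Finset.mem_union]
    by_cases hvf : v ∈ f
    · exact Or.inl (Or.inl (Or.inl (hinc hfE hvf)))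
    by_cases hxf : x ∈ f
    · refine Or.inl (Or.inl (Or.inr ?_))
      rw [Finset.mem_sdiff, Finset.mem_singleton]
      exact ⟨hinc hfE hxf, hfe⟩
    -- now v ∉ f and x ∉ f
    have hwv : w ≠ v := fun h => hvf (h ▸ hw)
    have hwx : w ≠ x := fun h => hxf (h ▸ hw)
    have huvx : u = v ∨ u = x := Sym2.mem_iff.mp hu
    have hadj : G.Adj u w := by
      rcases hor with h | h
      · exfalso
        rcases huvx with rfl | rfl
        · exact hvf (h ▸ hw)
        · exact hxf (h ▸ hw)
      · exact h
    rcases huvx with rfl | rfl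
    · refine Or.inl (Or.inr ?_)
      rw [Finset.mem_biUnion]
      refine ⟨w, ?_, ?_⟩
      · rw [Finset.mem_erase, SimpleGraph.mem_neighborFinset]
        exact ⟨hwx, hadj⟩
      · rw [Finset.mem_sdiff, Finset.mem_singleton]
        refine ⟨hinc hfE hw, fun h => hvf ?_⟩
        rw [h]; exact Sym2.mem_mk_left _ _
    · refine Or.inr ?_
      rw [Finset.mem_biUnion]
      refine ⟨w, ?_, ?_⟩
      · rw [Finset.mem_erase, SimpleGraph.mem_neighborFinset]
        exact ⟨hwv, hadj⟩
      · rw [Finset.mem_sdiff, Finset.mem_singleton]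
        refine ⟨hinc hfE hw, fun h => hxf ?_⟩
        rw [h]; exact Sym2.mem_mk_left _ _
  have hdx : G.degree x ≤ 4 := hΔ x
  have h1 : (G.incidenceFinset v).card ≤ 3 := by
    rw [SimpleGraph.card_incidenceFinset_eq_degree]; exact hdv
  have h2 : (G.incidenceFinset x \ {e}).card ≤ 3 := by
    have hesub : {e} ⊆ G.incidenceFinset x := by
      rw [Finset.singleton_subset_iff]
      exact hinc (G.mem_edgeSet.mpr hvx) (Sym2.mem_mk_right v x)
    rw [Finset.card_sdiff_of_subset hesub, Finset.card_singleton,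
      SimpleGraph.card_incidenceFinset_eq_degree]
    omega
  have hsmall : ∀ (a b : V), G.Adj a b → (G.incidenceFinset b \ {s(a, b)}).card ≤ 3 := by
    intro a b hab
    have hesub : {s(a, b)} ⊆ G.incidenceFinset b := by
      rw [Finset.singleton_subset_iff]
      exact hinc (G.mem_edgeSet.mpr hab) (Sym2.mem_mk_right a b)
    rw [Finset.card_sdiff_of_subset hesub, Finset.card_singleton,
      SimpleGraph.card_incidenceFinset_eq_degree]
    have := hΔ b
    omega
  have h3 : (((G.neighborFinset v).erase x).biUnion
      (fun w => G.incidenceFinset w \ {s(v, w)})).card ≤ 6 := by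
    have hb := Finset.card_biUnion_le_card_mul ((G.neighborFinset v).erase x)
      (fun w => G.incidenceFinset w \ {s(v, w)}) 3 ?_
    · have hcard : ((G.neighborFinset v).erase x).card ≤ 2 := by
        rw [Finset.card_erase_of_mem (by rwa [SimpleGraph.mem_neighborFinset])]
        have : (G.neighborFinset v).card = G.degree v := rfl
        omega
      calc (((G.neighborFinset v).erase x).biUnion
          (fun w => G.incidenceFinset w \ {s(v, w)})).card
          ≤ ((G.neighborFinset v).erase x).card * 3 := hb
        _ ≤ 2 * 3 := Nat.mul_le_mul_right 3 hcard
        _ = 6 := rfl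
    · intro w hw
      rw [Finset.mem_erase, SimpleGraph.mem_neighborFinset] at hw
      exact hsmall v w hw.2
  have h4 : (((G.neighborFinset x).erase v).biUnion
      (fun w => G.incidenceFinset w \ {s(x, w)})).card ≤ 9 := by
    have hb := Finset.card_biUnion_le_card_mul ((G.neighborFinset x).erase v)
      (fun w => G.incidenceFinset w \ {s(x, w)}) 3 ?_
    · have hcard : ((G.neighborFinset x).erase v).card ≤ 3 := by
        rw [Finset.card_erase_of_mem (by
          rw [SimpleGraph.mem_neighborFinset]; exact hvx.symm)]
        have : (G.neighborFinset x).card = G.degree x := rfl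
        omega
      calc (((G.neighborFinset x).erase v).biUnion
          (fun w => G.incidenceFinset w \ {s(x, w)})).card
          ≤ ((G.neighborFinset x).erase v).card * 3 := hb
        _ ≤ 3 * 3 := Nat.mul_le_mul_right 3 hcard
        _ = 9 := rfl
    · intro w hw
      rw [Finset.mem_erase, SimpleGraph.mem_neighborFinset] at hw
      exact hsmall x w hw.2
  have hTcard : T.card ≤ 21 := by
    rw [hT]
    calc (G.incidenceFinset v ∪ (G.incidenceFinset x \ {e}) ∪
          ((G.neighborFinset v).erase x).biUnion (fun w => G.incidenceFinset w \ {s(v, w)}) ∪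
          ((G.neighborFinset x).erase v).biUnion
            (fun w => G.incidenceFinset w \ {s(x, w)})).card
        ≤ (G.incidenceFinset v ∪ (G.incidenceFinset x \ {e}) ∪
          ((G.neighborFinset v).erase x).biUnion
            (fun w => G.incidenceFinset w \ {s(v, w)})).card +
          (((G.neighborFinset x).erase v).biUnion
            (fun w => G.incidenceFinset w \ {s(x, w)})).card := Finset.card_union_le _ _
      _ ≤ (G.incidenceFinset v ∪ (G.incidenceFinset x \ {e})).card +
          (((G.neighborFinset v).erase x).biUnion
            (fun w => G.incidenceFinset w \ {s(v, w)})).card +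
          (((G.neighborFinset x).erase v).biUnion
            (fun w => G.incidenceFinset w \ {s(x, w)})).card := by
            have := Finset.card_union_le (G.incidenceFinset v ∪ (G.incidenceFinset x \ {e}))
              (((G.neighborFinset v).erase x).biUnion (fun w => G.incidenceFinset w \ {s(v, w)}))
            omega
      _ ≤ 21 := by
            have := Finset.card_union_le (G.incidenceFinset v) (G.incidenceFinset x \ {e})
            omega
  have hAcard := Finset.card_le_card hsub
  have : (T.erase e).card ≤ 20 := by
    rw [Finset.card_erase_of_mem heT]
    omega
  omega

/-- A minimal counterexample (for lists of size 22) among connected simple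
graphs with maximum degree at most 4 is 4-regular. -/
theorem minimal_counterexample_four_regular
    {V : Type*} [Fintype V] (G : SimpleGraph V) [DecidableRel G.Adj]
    (hconn : G.Connected) (hΔ : ∀ u, G.degree u ≤ 4)
    (L : Sym2 V → Finset ℕ) (hL : ∀ e ∈ G.edgeSet, 22 ≤ (L e).card)
    (hG : ¬ StronglyLColorable G L)
    (hmin : ∀ H : SimpleGraph V, H < G → StronglyLColorable H L) :
    ∀ v, G.degree v = 4 := by
  classical
  intro v
  by_contra hne
  have hdv : G.degree v ≤ 3 := by
    have := hΔ v; omega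
  -- G has at least one edge
  have hEx : ∃ x, G.Adj v x := by
    by_cases hE : ∀ a b : V, ¬ G.Adj a b
    · exfalso
      apply hG
      refine ⟨fun _ => 0, ?_, ?_⟩
      · intro e₁ h1 e₂ h2 _ _
        exfalso
        induction e₁ with
        | h ab => exact hE _ _ (G.mem_edgeSet.mp h1)
      · intro e heE
        exfalso
        induction e with
        | h ab => exact hE _ _ (G.mem_edgeSet.mp heE)
    · push_neg at hE
      obtain ⟨a, b, hab⟩ := hE
      obtain ⟨p⟩ := hconn.preconnected v a
      cases p with
      | nil => exact ⟨b, hab⟩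
      | cons h _ => exact ⟨_, h⟩
  obtain ⟨x, hvx⟩ := hEx
  set H : SimpleGraph V := G.deleteEdges (G.incidenceSet v) with hH
  have hHle : H ≤ G := G.deleteEdges_le _
  have hHlt : H < G := by
    refine lt_of_le_of_ne hHle ?_
    intro h
    have : H.Adj v x := h ▸ hvx
    rw [hH, SimpleGraph.deleteEdges_adj] at this
    exact this.2 ⟨G.mem_edgeSet.mpr hvx, Sym2.mem_mk_left v x⟩
  obtain ⟨c, hc, hcL⟩ := hmin H hHlt
  have hHE : ∀ f : Sym2 V, f ∈ H.edgeSet ↔ f ∈ G.edgeSet ∧ v ∉ f := by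
    intro f
    rw [hH, SimpleGraph.edgeSet_deleteEdges, Set.mem_diff]
    constructor
    · rintro ⟨h1, h2⟩
      exact ⟨h1, fun hv => h2 ⟨h1, hv⟩⟩
    · rintro ⟨h1, h2⟩
      exact ⟨h1, fun hm => h2 hm.2⟩
  set E0 : Finset (Sym2 V) := G.edgeFinset.filter (fun f => v ∉ f) with hE0
  set Ev : Finset (Sym2 V) := G.edgeFinset.filter (fun f => v ∈ f) with hEv
  have hE0H : ∀ f : Sym2 V, f ∈ E0 ↔ f ∈ H.edgeSet := by
    intro f
    rw [hE0, Finset.mem_filter, SimpleGraph.mem_edgeFinset, hHE]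
  have key : ∀ S : Finset (Sym2 V), S ⊆ Ev →
      ∃ c' : Sym2 V → ℕ,
        (∀ e₁ ∈ E0 ∪ S, ∀ e₂ ∈ E0 ∪ S, e₁ ≠ e₂ → EdgeClose G e₁ e₂ → c' e₁ ≠ c' e₂) ∧
        (∀ f ∈ E0 ∪ S, c' f ∈ L f) := by
    intro S
    induction S using Finset.induction_on with
    | empty =>
      intro _
      refine ⟨c, ?_, ?_⟩
      · intro e₁ h1 e₂ h2 hne12 hclose
        rw [Finset.union_empty] at h1 h2
        have h1' := (hE0H e₁).mp h1
        have h2' := (hE0H e₂).mp h2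
        refine hc e₁ h1' e₂ h2' hne12 ?_
        obtain ⟨u, w, hu, hw, hor⟩ := hclose
        refine ⟨u, w, hu, hw, ?_⟩
        rcases hor with h | h
        · exact Or.inl h
        · refine Or.inr ?_
          rw [hH, SimpleGraph.deleteEdges_adj]
          refine ⟨h, fun hm => ?_⟩
          have hv : v ∈ s(u, w) := hm.2
          rcases Sym2.mem_iff.mp hv with rfl | rfl
          · exact ((hHE e₁).mp h1').2 hu
          · exact ((hHE e₂).mp h2').2 hw
      · intro f hf
        rw [Finset.union_empty] at hf
        exact hcL f ((hE0H f).mp hf)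
    | @insert a S haS ih =>
      intro hsub
      have haEv : a ∈ Ev := hsub (Finset.mem_insert_self a S)
      have hSEv : S ⊆ Ev := fun b hb => hsub (Finset.mem_insert_of_mem hb)
      obtain ⟨c', hc', hc'L⟩ := ih hSEv
      rw [hEv, Finset.mem_filter, SimpleGraph.mem_edgeFinset] at haEv
      obtain ⟨haE, hva⟩ := haEv
      obtain ⟨x', hax'⟩ := Sym2.mem_iff_exists.mp hva
      have hvx' : G.Adj v x' := G.mem_edgeSet.mp (hax' ▸ haE)
      -- forbidden colors
      set A : Finset (Sym2 V) :=
        (E0 ∪ S).filter (fun f => f ≠ a ∧ EdgeClose G a f) with hA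
      have hsubEF : E0 ∪ S ⊆ G.edgeFinset := by
        intro f hf
        rcases Finset.mem_union.mp hf with h | h
        · exact Finset.mem_of_mem_filter f h
        · exact Finset.mem_of_mem_filter f (hSEv h)
      have hAcard : A.card ≤ 20 := by
        refine close_count G hΔ hvx' hdv A ?_
        intro f hf
        rw [hA, Finset.mem_filter] at hf
        obtain ⟨hf1, hf2, hf3⟩ := hf
        exact ⟨SimpleGraph.mem_edgeFinset.mp (hsubEF hf1), hax' ▸ hf2, hax' ▸ hf3⟩
      set Forb : Finset ℕ := A.image c' with hF
      have hFcard : Forb.card ≤ 20 := le_trans (Finset.card_image_le) hAcard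
      have hnotsub : ¬ (L a ⊆ Forb) := by
        intro hs
        have := Finset.card_le_card hs
        have := hL a haE
        omega
      obtain ⟨col, hcolL, hcolF⟩ := Finset.not_subset.mp hnotsub
      refine ⟨Function.update c' a col, ?_, ?_⟩
      · intro e₁ h1 e₂ h2 hne12 hclose
        rw [Finset.union_insert, Finset.mem_insert] at h1 h2
        have hmemA : ∀ f ∈ E0 ∪ S, f ≠ a → EdgeClose G a f → c' f ∈ Forb := by
          intro f hf hfa hcl
          rw [hF]
          exact Finset.mem_image_of_mem c' (by rw [hA, Finset.mem_filter]; exact ⟨hf, hfa, hcl⟩)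
        have hanF : a ∉ E0 ∪ S := by
          intro hmem
          rcases Finset.mem_union.mp hmem with hh | hh
          · rw [hE0, Finset.mem_filter] at hh
            exact hh.2 hva
          · exact haS hh
        rcases h1 with rfl | h1 <;> rcases h2 with rfl | h2
        · exact absurd rfl hne12
        · have hne2a : e₂ ≠ e₁ := fun h => hne12 h.symm
          rw [Function.update_self, Function.update_of_ne hne2a _ _]
          intro h
          exact hcolF (h ▸ hmemA e₂ h2 hne2a hclose)
        · rw [Function.update_self, Function.update_of_ne hne12 _ _]
          intro h
          apply hcolF
          rw [← h]
          exact hmemA e₁ h1 hne12 (edgeClose_symm G hclose)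
        · have hne1a : e₁ ≠ a := fun h => hanF (h ▸ h1)
          have hne2a : e₂ ≠ a := fun h => hanF (h ▸ h2)
          rw [Function.update_of_ne hne1a _ _, Function.update_of_ne hne2a _ _]
          exact hc' e₁ h1 e₂ h2 hne12 hclose
      · intro f hf
        rw [Finset.union_insert, Finset.mem_insert] at hf
        rcases hf with rfl | hf
        · rw [Function.update_self]
          exact hcolL
        · have hanF : f ≠ a := by
            intro h
            subst h
            rcases Finset.mem_union.mp hf with hh | hh
            · rw [hE0, Finset.mem_filter] at hh
              exact hh.2 hva
            · exact haS hh
          rw [Function.update_of_ne hanF _ _]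
          exact hc'L f hf
  obtain ⟨cs, hcs, hcsL⟩ := key Ev (le_refl Ev)
  have hcover : ∀ f ∈ G.edgeSet, f ∈ E0 ∪ Ev := by
    intro f hf
    rw [Finset.mem_union, hE0, hEv, Finset.mem_filter, Finset.mem_filter,
      SimpleGraph.mem_edgeFinset]
    by_cases hvf : v ∈ f
    · exact Or.inr ⟨hf, hvf⟩
    · exact Or.inl ⟨hf, hvf⟩
  exact hG ⟨cs, fun e₁ h1 e₂ h2 hne12 hcl =>
    hcs e₁ (hcover e₁ h1) e₂ (hcover e₂ h2) hne12 hcl,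
    fun f hf => hcsL f (hcover f hf)⟩
end
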